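/- Let U and V be independent Bernoulli random variables with means p and q respectively, and let X, Y be real-valued random variables such that X is conditionally independent of V given U, and Y is conditionally independent of U given V. Then Cov(UX, VY) = p·q·Cov(X, Y | U = 1, V = 1). -/

import Mathlib

open MeasureTheory ProbabilityTheory

/-- Covariance of two real random variables with respect to a measure. -/
noncomputable def covm {Ω : Type*} [MeasurableSpace Ω] (μ : Measure Ω) (X Y : Ω → ℝ) : ℝ :=
  (∫ ω, X ω * Y ω ∂μ) - (∫ ω, X ω ∂μ) * (∫ ω, Y ω ∂μ)

lemma aux_setIntegral {Ω : Type*} [mΩ : MeasurableSpace Ω] [StandardBorelSpace Ω]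
    (μ : Measure Ω) [IsProbabilityMeasure μ]
    (U V X : Ω → ℝ)
    (hU : Measurable U) (hV : Measurable V) (hX : Measurable X)
    (hUV : IndepFun U V μ)
    (hXV : CondIndepFun (MeasurableSpace.comap U inferInstance) hU.comap_le X V μ)
    (hXint : Integrable X μ) :
    ∫ ω in U ⁻¹' {1} ∩ V ⁻¹' {1}, X ω ∂μ
      = (μ (V ⁻¹' {1})).toReal * ∫ ω in U ⁻¹' {1}, X ω ∂μ := by
  set A := U ⁻¹' {1} with hA_def
  set B := V ⁻¹' {1} with hB_def
  have hA : MeasurableSet[MeasurableSpace.comap U inferInstance] A :=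
    ⟨{1}, measurableSet_singleton 1, rfl⟩
  have hAm : MeasurableSet A := hU (measurableSet_singleton 1)
  have hBm : MeasurableSet B := hV (measurableSet_singleton 1)
  have hCint : ∀ (C : Set Ω), MeasurableSet C →
      Integrable (C.indicator (fun _ => (1 : ℝ))) μ :=
    fun C hC => (integrable_const 1).indicator hC
  -- conditional expectation of the indicator of B is constant q
  have hBind : (μ⟦B | MeasurableSpace.comap U inferInstance⟧) =ᵐ[μ] fun _ => (μ B).toReal := by
    have hBsm : StronglyMeasurable[MeasurableSpace.comap V inferInstance]
        (B.indicator (fun _ => (1 : ℝ))) :=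
      stronglyMeasurable_const.indicator ⟨{1}, measurableSet_singleton 1, rfl⟩
    have hindep : Indep (MeasurableSpace.comap V inferInstance) (MeasurableSpace.comap U inferInstance) μ :=
      ((IndepFun_iff_Indep U V μ).mp hUV).symm
    have := condExp_indep_eq hV.comap_le hU.comap_le hBsm hindep
    refine this.trans ?_
    have h2 : ∫ x, B.indicator (fun _ => (1 : ℝ)) x ∂μ = (μ B).toReal := by
      rw [integral_indicator hBm, setIntegral_const, smul_eq_mul, mul_one, measureReal_def]
    exact Filter.EventuallyEq.of_eq (by funext x; exact h2)
  -- key measure identity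
  have key : ∀ s : Set ℝ, MeasurableSet s →
      (μ (X ⁻¹' s ∩ (A ∩ B))).toReal = (μ B).toReal * (μ (X ⁻¹' s ∩ A)).toReal := by
    intro s hs
    have h1 := (condIndepFun_iff_condExp_inter_preimage_eq_mul hX hV).mp hXV s {1} hs
      (measurableSet_singleton 1)
    have e1 : ∫ ω in A, (μ⟦X ⁻¹' s ∩ B | MeasurableSpace.comap U inferInstance⟧) ω ∂μ = (μ (X ⁻¹' s ∩ (A ∩ B))).toReal := by
      rw [setIntegral_condExp hU.comap_le (hCint _ ((hX hs).inter hBm)) hA,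
        setIntegral_indicator ((hX hs).inter hBm), setIntegral_const, smul_eq_mul, mul_one]
      congr 1
      rw [Set.inter_comm A, Set.inter_assoc, Set.inter_comm B A]
    have e2 : ∫ ω in A, (μ⟦X ⁻¹' s | MeasurableSpace.comap U inferInstance⟧) ω ∂μ = (μ (X ⁻¹' s ∩ A)).toReal := by
      rw [setIntegral_condExp hU.comap_le (hCint _ (hX hs)) hA,
        setIntegral_indicator (hX hs), setIntegral_const, smul_eq_mul, mul_one,
        Set.inter_comm, measureReal_def]
    have e3 : ∫ ω in A, (μ⟦X ⁻¹' s ∩ B | MeasurableSpace.comap U inferInstance⟧) ω ∂μ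
        = ∫ ω in A, (μ B).toReal * (μ⟦X ⁻¹' s | MeasurableSpace.comap U inferInstance⟧) ω ∂μ := by
      refine integral_congr_ae (ae_restrict_of_ae ?_)
      filter_upwards [h1, hBind] with ω h1ω hBω
      rw [h1ω, hBω]; ring
    rw [← e1, e3, integral_const_mul, e2]
  -- pushforward measure identity
  have hmap : Measure.map X (μ.restrict (A ∩ B)) = (μ B) • Measure.map X (μ.restrict A) := by
    ext s hs
    rw [Measure.map_apply hX hs, Measure.smul_apply, Measure.map_apply hX hs,
      Measure.restrict_apply (hX hs), Measure.restrict_apply (hX hs), smul_eq_mul]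
    have hk := key s hs
    refine (ENNReal.toReal_eq_toReal_iff' (measure_ne_top _ _)
      (ENNReal.mul_ne_top (measure_ne_top _ _) (measure_ne_top _ _))).mp ?_
    rw [ENNReal.toReal_mul]
    exact hk
  calc ∫ ω in A ∩ B, X ω ∂μ
      = ∫ x, x ∂(Measure.map X (μ.restrict (A ∩ B))) :=
        (integral_map hX.aemeasurable aestronglyMeasurable_id).symm
    _ = ∫ x, x ∂((μ B) • Measure.map X (μ.restrict A)) := by rw [hmap]
    _ = (μ B).toReal * ∫ x, x ∂(Measure.map X (μ.restrict A)) := by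
        rw [integral_smul_measure, smul_eq_mul]
    _ = (μ B).toReal * ∫ ω in A, X ω ∂μ := by
        congr 1
        exact integral_map hX.aemeasurable aestronglyMeasurable_id

/-- For independent Bernoulli `U, V` with means `p, q > 0`, and `X ⟂ V | U`,
`Y ⟂ U | V`, we have `Cov(UX, VY) = p q · Cov(X, Y | U = 1, V = 1)`. -/
theorem stmt0 {Ω : Type*} [mΩ : MeasurableSpace Ω] [StandardBorelSpace Ω]
    (μ : Measure Ω) [IsProbabilityMeasure μ]
    (U V X Y : Ω → ℝ) (p q : ℝ) (hp : 0 < p) (hq : 0 < q)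
    (hUval : ∀ ω, U ω = 0 ∨ U ω = 1) (hVval : ∀ ω, V ω = 0 ∨ V ω = 1)
    (hU : Measurable U) (hV : Measurable V) (hX : Measurable X) (hY : Measurable Y)
    (hUV : IndepFun U V μ)
    (hpU : (μ {ω | U ω = 1}).toReal = p) (hqV : (μ {ω | V ω = 1}).toReal = q)
    (hXV : CondIndepFun (MeasurableSpace.comap U inferInstance) hU.comap_le X V μ)
    (hYU : CondIndepFun (MeasurableSpace.comap V inferInstance) hV.comap_le Y U μ)
    (hXint : Integrable X μ) (hYint : Integrable Y μ)
    (hXYint : Integrable (fun ω => X ω * Y ω) μ)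
    (hprod : Integrable (fun ω => (U ω * X ω) * (V ω * Y ω)) μ)
    (hUX : Integrable (fun ω => U ω * X ω) μ) (hVY : Integrable (fun ω => V ω * Y ω) μ) :
    covm μ (fun ω => U ω * X ω) (fun ω => V ω * Y ω)
      = p * q * covm (μ[|{ω | U ω = 1} ∩ {ω | V ω = 1}]) X Y := by
  have hAset : {ω | U ω = 1} = U ⁻¹' {1} := rfl
  have hBset : {ω | V ω = 1} = V ⁻¹' {1} := rfl
  set A := U ⁻¹' {1} with hA_def
  set B := V ⁻¹' {1} with hB_def
  rw [hAset] at hpU ⊢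
  rw [hBset] at hqV ⊢
  have hAm : MeasurableSet A := hU (measurableSet_singleton 1)
  have hBm : MeasurableSet B := hV (measurableSet_singleton 1)
  -- μ (A ∩ B) = μ A * μ B
  have hABμ : μ (A ∩ B) = μ A * μ B :=
    hUV.measure_inter_preimage_eq_mul {1} {1} (measurableSet_singleton 1)
      (measurableSet_singleton 1)
  have hABtoReal : (μ (A ∩ B)).toReal = p * q := by
    rw [hABμ, ENNReal.toReal_mul, hpU, hqV]
  -- pointwise indicator identities
  have hUXpt : ∀ ω, U ω * X ω = A.indicator X ω := by
    intro ω
    rcases hUval ω with h | h <;>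
      simp [A, Set.indicator_apply, Set.mem_preimage, h]
  have hVYpt : ∀ ω, V ω * Y ω = B.indicator Y ω := by
    intro ω
    rcases hVval ω with h | h <;>
      simp [B, Set.indicator_apply, Set.mem_preimage, h]
  have hprodpt : ∀ ω, (U ω * X ω) * (V ω * Y ω)
      = (A ∩ B).indicator (fun ω => X ω * Y ω) ω := by
    intro ω
    rcases hUval ω with h | h <;> rcases hVval ω with h' | h' <;>
      simp [A, B, Set.indicator_apply, Set.mem_preimage, h, h']
  -- integrals of the products as set integrals
  have iUX : ∫ ω, U ω * X ω ∂μ = ∫ ω in A, X ω ∂μ := by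
    rw [show (fun ω => U ω * X ω) = A.indicator X from funext hUXpt, integral_indicator hAm]
  have iVY : ∫ ω, V ω * Y ω ∂μ = ∫ ω in B, Y ω ∂μ := by
    rw [show (fun ω => V ω * Y ω) = B.indicator Y from funext hVYpt, integral_indicator hBm]
  have iProd : ∫ ω, (U ω * X ω) * (V ω * Y ω) ∂μ = ∫ ω in A ∩ B, X ω * Y ω ∂μ := by
    rw [show (fun ω => (U ω * X ω) * (V ω * Y ω))
        = (A ∩ B).indicator (fun ω => X ω * Y ω) from funext hprodpt,
      integral_indicator (hAm.inter hBm)]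
  -- the two conditional independence identities
  have keyX : ∫ ω in A ∩ B, X ω ∂μ = q * ∫ ω in A, X ω ∂μ := by
    rw [aux_setIntegral μ U V X hU hV hX hUV hXV hXint, hqV]
  have keyY : ∫ ω in A ∩ B, Y ω ∂μ = p * ∫ ω in B, Y ω ∂μ := by
    rw [Set.inter_comm, aux_setIntegral μ V U Y hV hU hY hUV.symm hYU hYint, hpU]
  -- conditional measure integrals
  have hcond : ∀ f : Ω → ℝ, ∫ ω, f ω ∂(μ[|A ∩ B]) = (p * q)⁻¹ * ∫ ω in A ∩ B, f ω ∂μ := by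
    intro f
    rw [ProbabilityTheory.cond, integral_smul_measure, ENNReal.toReal_inv, hABtoReal,
      smul_eq_mul]
  simp only [covm, hcond, iUX, iVY, iProd, keyX, keyY]
  have hp' : p ≠ 0 := hp.ne'
  have hq' : q ≠ 0 := hq.ne'
  field_simp
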